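/- Let d, b be positive integers with ⌈d/b⌉ ≥ 3 odd. The graph G*₁(d,b), formed by taking d disjoint copies of H = K_{d-⌈d/b⌉+2} ∨ complement(((⌈d/b⌉-1)/2)·K₂), adding a set S of ⌈d/b⌉-1 new vertices, and matching the vertices of S to the ⌈d/b⌉-1 vertices of degree d-1 in each copy of H, is a d-regular graph that is not 1/b-tough: indeed |S|/c(G*₁(d,b)-S) = (⌈d/b⌉-1)/d < 1/b. -/
import Mathlib


open scoped Classical

/-- Vertices of `G*₁(d,b)` (with `c = ⌈d/b⌉`): a set `S` of `c - 1` new vertices, plus `d`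
copies of `H(d,b) = K_{d-c+2} ∨ complement(((c-1)/2) • K₂)`; in each copy the cocktail party
part has `c - 1` vertices (`Sum.inl`) and the clique part has `d - c + 2` vertices
(`Sum.inr`). -/
abbrev GVert (d c : ℕ) := Fin (c - 1) ⊕ (Fin d × (Fin (c - 1) ⊕ Fin (d - c + 2)))

/-- The graph `G*₁(d,b)`: inside each copy, the cocktail party part (complement of the perfect
matching pairing `2k` with `2k+1`) is joined completely to the clique part; the `s`-th vertex of
`S` is matched to the `s`-th cocktail party vertex (the vertices of degree `d - 1` in the copy)
of every copy. -/
def Gstar (d c : ℕ) : SimpleGraph (GVert d c) :=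
  SimpleGraph.fromRel fun a b =>
    match a, b with
    | .inl s, .inr (_, .inl v) => s = v
    | .inr (i, x), .inr (j, y) =>
        i = j ∧ (match x, y with
          | .inl v, .inl w => (v : ℕ) / 2 ≠ (w : ℕ) / 2
          | _, _ => True)
    | _, _ => False

lemma adj_inl (d c : ℕ) (s : Fin (c-1)) (y : GVert d c) :
    (Gstar d c).Adj (Sum.inl s) y ↔ ∃ i, y = Sum.inr (i, Sum.inl s) := by
  rcases y with t | ⟨j, w | u⟩ <;>
    simp [Gstar, SimpleGraph.fromRel_adj, eq_comm]

lemma card_half (n : ℕ) (hn : n % 2 = 0) (v : Fin n) :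
    (Finset.univ.filter fun w : Fin n => ¬ (v:ℕ)/2 = (w:ℕ)/2).card = n - 2 := by
  have hv := v.isLt
  have h2 : (Finset.univ.filter fun w : Fin n => (v:ℕ)/2 = (w:ℕ)/2) =
      {⟨2*((v:ℕ)/2), by omega⟩, ⟨2*((v:ℕ)/2)+1, by omega⟩} := by
    ext w
    obtain ⟨w, hw⟩ := w
    simp [Fin.ext_iff]
    omega
  have h3 := Finset.card_filter_add_card_filter_not
    (s := (Finset.univ : Finset (Fin n))) (p := fun w : Fin n => (v:ℕ)/2 = (w:ℕ)/2)
  have h4 : (Finset.univ.filter fun w : Fin n => (v:ℕ)/2 = (w:ℕ)/2).card = 2 := by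
    rw [h2]
    rw [Finset.card_insert_of_notMem (by simp [Fin.ext_iff]), Finset.card_singleton]
  simp only [Finset.card_univ, Fintype.card_fin] at h3
  omega

lemma adj_cock (d c : ℕ) (i : Fin d) (v : Fin (c-1)) (y : GVert d c) :
    (Gstar d c).Adj (Sum.inr (i, Sum.inl v)) y ↔
      y = Sum.inl v ∨ (∃ w : Fin (c-1), (v:ℕ)/2 ≠ (w:ℕ)/2 ∧ y = Sum.inr (i, Sum.inl w)) ∨
      (∃ u : Fin (d-c+2), y = Sum.inr (i, Sum.inr u)) := by
  rcases y with t | ⟨j, w | u⟩ <;>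
    simp only [Gstar, SimpleGraph.fromRel_adj, ne_eq, Sum.inr.injEq, Prod.mk.injEq,
      Sum.inl.injEq, Sum.inr.injEq, Sum.exists, Sum.inl_ne_inr, false_or, or_false,
      exists_and_left, exists_eq_left] <;>
    constructor
  · tauto
  · rintro (rfl | h) <;> simp_all
  · rintro ⟨h1, (⟨rfl, h2⟩ | ⟨rfl, h2⟩)⟩
    · exact Or.inr (Or.inl ⟨w, h2, rfl, rfl⟩)
    · exact Or.inr (Or.inl ⟨w, fun hh => h2 hh.symm, rfl, rfl⟩)
  · rintro (h | ⟨w', hne, rfl, rfl⟩ | ⟨rfl, x, hx⟩)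
    · simp at h
    · refine ⟨fun hh => ?_, Or.inl ⟨rfl, hne⟩⟩
      exact hne (hh.2 ▸ rfl)
    · exact hx.elim
  · rintro ⟨h1, (⟨rfl, -⟩ | ⟨rfl, -⟩)⟩ <;> exact Or.inr (Or.inr ⟨rfl, u, rfl⟩)
  · rintro (h | ⟨w', hne, rfl, h⟩ | ⟨rfl, -⟩)
    · simp at h
    · simp at h
    · exact ⟨by simp, Or.inl ⟨rfl, trivial⟩⟩

lemma adj_cliq (d c : ℕ) (i : Fin d) (u : Fin (d-c+2)) (y : GVert d c) :
    (Gstar d c).Adj (Sum.inr (i, Sum.inr u)) y ↔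
      (∃ w : Fin (c-1), y = Sum.inr (i, Sum.inl w)) ∨
      (∃ u' : Fin (d-c+2), u' ≠ u ∧ y = Sum.inr (i, Sum.inr u')) := by
  rcases y with t | ⟨j, w | u'⟩ <;>
    simp only [Gstar, SimpleGraph.fromRel_adj, ne_eq, Sum.inr.injEq, Prod.mk.injEq,
      Sum.inl.injEq, Sum.inr.injEq, Sum.exists, Sum.inl_ne_inr, false_or, or_false,
      exists_and_left, exists_eq_left] <;>
    constructor
  · tauto
  · tauto
  · rintro ⟨-, (⟨rfl, -⟩ | ⟨rfl, -⟩)⟩ <;> exact Or.inl ⟨rfl, w, rfl⟩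
  · rintro (⟨rfl, -⟩ | ⟨-, -, -, h⟩)
    · exact ⟨by simp, Or.inl ⟨rfl, trivial⟩⟩
    · exact h.elim
  · rintro ⟨h1, (⟨rfl, -⟩ | ⟨rfl, -⟩)⟩ <;>
      exact Or.inr ⟨u', fun hh => h1 ⟨rfl, hh ▸ rfl⟩, rfl, rfl⟩
  · rintro (⟨rfl, x, hx⟩ | ⟨u'', hne, rfl, rfl⟩)
    · exact absurd hx (by simp)
    · exact ⟨fun hh => hne hh.2.symm, Or.inl ⟨rfl, trivial⟩⟩

lemma deg_inl (d c : ℕ) (s : Fin (c-1)) : (Gstar d c).degree (Sum.inl s) = d := by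
  have h : (Gstar d c).neighborFinset (Sum.inl s) =
      Finset.univ.image (fun i : Fin d => (Sum.inr (i, Sum.inl s) : GVert d c)) := by
    ext y
    simp [SimpleGraph.mem_neighborFinset, adj_inl, eq_comm]
  rw [SimpleGraph.degree, h, Finset.card_image_of_injective _ (fun a b h => by simpa using h),
    Finset.card_univ, Fintype.card_fin]

lemma deg_cock (d c : ℕ) (hc3 : 3 ≤ c) (hcd : c ≤ d) (hodd : Odd c)
    (i : Fin d) (v : Fin (c-1)) : (Gstar d c).degree (Sum.inr (i, Sum.inl v)) = d := by
  have h : (Gstar d c).neighborFinset (Sum.inr (i, Sum.inl v)) =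
      {Sum.inl v} ∪
      (Finset.univ.filter fun w : Fin (c-1) => ¬ (v:ℕ)/2 = (w:ℕ)/2).image
        (fun w => (Sum.inr (i, Sum.inl w) : GVert d c)) ∪
      Finset.univ.image (fun u : Fin (d-c+2) => (Sum.inr (i, Sum.inr u) : GVert d c)) := by
    ext y
    simp only [SimpleGraph.mem_neighborFinset, adj_cock, Finset.mem_union, Finset.mem_singleton,
      Finset.mem_image, Finset.mem_filter, Finset.mem_univ, true_and]
    constructor
    · rintro (rfl | ⟨w, hw, rfl⟩ | ⟨u, rfl⟩)
      · exact Or.inl (Or.inl rfl)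
      · exact Or.inl (Or.inr ⟨w, hw, rfl⟩)
      · exact Or.inr ⟨u, rfl⟩
    · rintro ((rfl | ⟨w, hw, rfl⟩) | ⟨u, rfl⟩)
      · exact Or.inl rfl
      · exact Or.inr (Or.inl ⟨w, hw, rfl⟩)
      · exact Or.inr (Or.inr ⟨u, rfl⟩)
  rw [SimpleGraph.degree, h]
  rw [Finset.card_union_of_disjoint, Finset.card_union_of_disjoint]
  · rw [Finset.card_singleton, Finset.card_image_of_injective _ (fun a b h => by simpa using h),
      Finset.card_image_of_injective _ (fun a b h => by simpa using h),
      card_half (c-1) (by obtain ⟨k,hk⟩ := hodd; omega) v, Finset.card_univ, Fintype.card_fin]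
    omega
  · simp [Finset.disjoint_left]
  · simp [Finset.disjoint_left]

lemma deg_cliq (d c : ℕ) (hc3 : 3 ≤ c) (hcd : c ≤ d)
    (i : Fin d) (u : Fin (d-c+2)) : (Gstar d c).degree (Sum.inr (i, Sum.inr u)) = d := by
  have h : (Gstar d c).neighborFinset (Sum.inr (i, Sum.inr u)) =
      Finset.univ.image (fun w : Fin (c-1) => (Sum.inr (i, Sum.inl w) : GVert d c)) ∪
      (Finset.univ.erase u).image (fun u' => (Sum.inr (i, Sum.inr u') : GVert d c)) := by
    ext y
    simp only [SimpleGraph.mem_neighborFinset, adj_cliq, Finset.mem_union, Finset.mem_image,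
      Finset.mem_erase, Finset.mem_univ, true_and, and_true]
    constructor
    · rintro (⟨w, rfl⟩ | ⟨u', hu, rfl⟩)
      · exact Or.inl ⟨w, rfl⟩
      · exact Or.inr ⟨u', hu, rfl⟩
    · rintro (⟨w, rfl⟩ | ⟨u', hu, rfl⟩)
      · exact Or.inl ⟨w, rfl⟩
      · exact Or.inr ⟨u', hu, rfl⟩
  rw [SimpleGraph.degree, h, Finset.card_union_of_disjoint (by simp [Finset.disjoint_left]),
    Finset.card_image_of_injective _ (fun a b h => by simpa using h),
    Finset.card_image_of_injective _ (fun a b h => by simpa using h),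
    Finset.card_univ, Fintype.card_fin, Finset.card_erase_of_mem (Finset.mem_univ u),
    Finset.card_univ, Fintype.card_fin]
  omega

theorem stmt13 (d b c : ℕ) (hd : 0 < d) (hb : 0 < b)
    (hc : c = Nat.ceil ((d : ℚ) / b)) (hc3 : 3 ≤ c) (hodd : Odd c) :
    (Gstar d c).IsRegularOfDegree d ∧
      Nat.card ((Gstar d c).induce
        ((Set.range (Sum.inl : Fin (c - 1) → GVert d c))ᶜ)).ConnectedComponent = d ∧
      ((c : ℝ) - 1) / d < 1 / b := by
  have hc1 : ((c:ℚ) - 1) < (d:ℚ)/b := by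
    have hlt : c - 1 < Nat.ceil ((d:ℚ)/b) := by rw [← hc]; omega
    have h := Nat.lt_ceil.mp hlt
    rw [Nat.cast_sub (show 1 ≤ c by omega)] at h
    exact_mod_cast h
  have hkey : b * (c - 1) < d := by
    have h0 : ((c:ℚ) - 1) * b < d := by
      rw [← lt_div_iff₀ (by exact_mod_cast hb)]; exact hc1
    have h1 : ((b * (c-1) : ℕ) : ℚ) < (d : ℚ) := by
      push_cast [Nat.cast_sub (show 1 ≤ c by omega)]
      linarith
    exact_mod_cast h1
  have hcd : c ≤ d := by
    have := Nat.le_mul_of_pos_left (c-1) hb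
    omega
  refine ⟨?_, ?_, ?_⟩
  · intro x
    rcases x with s | ⟨i, v | u⟩
    · exact deg_inl d c s
    · exact deg_cock d c hc3 hcd hodd i v
    · exact deg_cliq d c hc3 hcd i u
  · set S : Set (GVert d c) := Set.range (Sum.inl : Fin (c-1) → GVert d c) with hS
    set G' := (Gstar d c).induce Sᶜ with hG'
    have hmem : ∀ (p : Fin d × (Fin (c-1) ⊕ Fin (d-c+2))), (Sum.inr p : GVert d c) ∈ Sᶜ := by
      intro p; simp [hS]
    have h0lt : 0 < d - c + 2 := by omega
    set hub : Fin d → ↥Sᶜ := fun i => ⟨Sum.inr (i, Sum.inr ⟨0, h0lt⟩), hmem _⟩ with hhub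
    set idx : ↥Sᶜ → Fin d :=
      fun x => Sum.elim (fun _ => (⟨0, hd⟩ : Fin d)) Prod.fst x.1 with hidx
    have key : ∀ x y : ↥Sᶜ, G'.Adj x y → idx x = idx y := by
      rintro ⟨s | ⟨i, z⟩, hx⟩ ⟨t | ⟨j, z'⟩, hy⟩ hadj
      · simp [hS] at hx
      · simp [hS] at hx
      · simp [hS] at hy
      · have hadj' : (Gstar d c).Adj (Sum.inr (i, z)) (Sum.inr (j, z')) := hadj
        rcases z with v | u
        · rw [adj_cock] at hadj'
          rcases hadj' with h | ⟨w, -, h⟩ | ⟨u, h⟩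
          · exact absurd h (by simp)
          · simp only [Sum.inr.injEq, Prod.mk.injEq] at h
            simp [hidx, h.1]
          · simp only [Sum.inr.injEq, Prod.mk.injEq] at h
            simp [hidx, h.1]
        · rw [adj_cliq] at hadj'
          rcases hadj' with ⟨w, h⟩ | ⟨u', -, h⟩ <;>
            · simp only [Sum.inr.injEq, Prod.mk.injEq] at h
              simp [hidx, h.1]
    have reach_idx : ∀ x y : ↥Sᶜ, G'.Reachable x y → idx x = idx y := by
      intro x y hr
      refine hr.elim fun p => ?_
      induction p with
      | nil => rfl
      | cons ha p ih => exact (key _ _ ha).trans (ih ⟨p⟩)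
    have hub_reach : ∀ x : ↥Sᶜ, G'.Reachable x (hub (idx x)) := by
      rintro ⟨s | ⟨i, v | u⟩, hx⟩
      · simp [hS] at hx
      · refine SimpleGraph.Adj.reachable ?_
        show (Gstar d c).Adj (Sum.inr (i, Sum.inl v)) _
        rw [adj_cock]
        exact Or.inr (Or.inr ⟨⟨0, h0lt⟩, rfl⟩)
      · by_cases hu : u = ⟨0, h0lt⟩
        · subst hu; exact SimpleGraph.Reachable.refl _
        · refine SimpleGraph.Adj.reachable ?_
          show (Gstar d c).Adj (Sum.inr (i, Sum.inr u)) _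
          rw [adj_cliq]
          exact Or.inr ⟨⟨0, h0lt⟩, fun h => hu h.symm, rfl⟩
    set g : Fin d → G'.ConnectedComponent := fun i => G'.connectedComponentMk (hub i) with hg
    have hbij : Function.Bijective g := by
      constructor
      · intro i j h
        have hr := (SimpleGraph.ConnectedComponent.eq).mp h
        have := reach_idx _ _ hr
        simpa [hidx, hhub] using this
      · intro C
        refine C.ind fun x => ?_
        exact ⟨idx x, (SimpleGraph.ConnectedComponent.sound (hub_reach x)).symm⟩
    rw [← Nat.card_eq_of_bijective g hbij, Nat.card_eq_fintype_card, Fintype.card_fin]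
  · rw [div_lt_div_iff₀ (by exact_mod_cast hd) (by exact_mod_cast hb)]
    have h1 : ((b * (c-1) : ℕ) : ℝ) < d := by exact_mod_cast hkey
    push_cast [Nat.cast_sub (show 1 ≤ c by omega)] at h1
    linarith
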